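/- For every positive integer n and all positive reals c₀, c₁ there exists B > 0 such that the following holds: for every n×n complex matrix K with Kᵀ K = I_n and all complex numbers α_1, …, α_n with |α_k| ≤ c₀ for all k and |α_i − α_j| ≥ c₁ for all i ≠ j, letting Γ = diag(α_1, …, α_n), one has ‖K Kᴴ‖ + ‖(K Kᴴ)^{-1}‖ ≤ B · (1 + ‖Kᵀ Γ K‖)ⁿ, where ‖·‖ denotes the ℓ²-operator norm on n×n complex matrices. -/

import Mathlib

open Matrix

noncomputable section

/-- The `ℓ²`-operator norm of a complex square matrix, i.e. the operator norm of the
induced linear map on the Euclidean space `ℂⁿ`. -/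
def l2OpNorm {n : ℕ} (A : Matrix (Fin n) (Fin n) ℂ) : ℝ :=
  ‖(Matrix.toEuclideanCLM (𝕜 := ℂ) A :
      EuclideanSpace ℂ (Fin n) →L[ℂ] EuclideanSpace ℂ (Fin n))‖

open scoped Matrix.Norms.L2Operator

namespace GramAux

variable {n : ℕ}

/-- Vector in Euclidean space from a plain function. -/
def ev (v : Fin n → ℂ) : EuclideanSpace ℂ (Fin n) := (WithLp.equiv 2 _).symm v

lemma ev_apply (v : Fin n → ℂ) (i : Fin n) : ev v i = v i := rfl

lemma clm_apply (A : Matrix (Fin n) (Fin n) ℂ) (v : Fin n → ℂ) :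
    Matrix.toEuclideanCLM (𝕜 := ℂ) A (ev v) = ev (A *ᵥ v) := by
  simp [ev, Matrix.toEuclideanCLM_toLp, Matrix.toLin'_apply]

lemma norm_ev_sq (v : Fin n → ℂ) : ‖ev v‖ ^ 2 = ∑ i, ‖v i‖ ^ 2 := by
  rw [EuclideanSpace.norm_eq, Real.sq_sqrt (by positivity)]
  rfl

lemma norm_ev_smul (c : ℂ) (v : Fin n → ℂ) : ev (c • v) = c • ev v := rfl

lemma opNorm_le {A : Matrix (Fin n) (Fin n) ℂ} {C : ℝ} (hC : 0 ≤ C)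
    (h : ∀ v : Fin n → ℂ, ‖ev (A *ᵥ v)‖ ≤ C * ‖ev v‖) : ‖A‖ ≤ C := by
  rw [Matrix.cstar_norm_def]
  refine ContinuousLinearMap.opNorm_le_bound _ hC fun x => ?_
  have hx : x = ev (WithLp.equiv 2 _ x) := rfl
  rw [hx, clm_apply]
  exact h _

lemma apply_le (A : Matrix (Fin n) (Fin n) ℂ) (v : Fin n → ℂ) :
    ‖ev (A *ᵥ v)‖ ≤ ‖A‖ * ‖ev v‖ := by
  rw [← clm_apply, Matrix.cstar_norm_def]
  exact (Matrix.toEuclideanCLM (𝕜 := ℂ) A).le_opNorm _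


lemma mulVec_vecMulVec (v w x : Fin n → ℂ) :
    vecMulVec v w *ᵥ x = (∑ j, w j * x j) • v := by
  ext i
  simp [vecMulVec_apply, mulVec, dotProduct, Finset.mul_sum, Finset.sum_mul]
  exact Finset.sum_congr rfl fun j _ => by ring

lemma inner_ev (v x : Fin n → ℂ) :
    (∑ j, (starRingEnd ℂ) (v j) * x j) = inner (𝕜 := ℂ) (ev v) (ev x) := by
  rw [PiLp.inner_apply]
  exact Finset.sum_congr rfl fun j _ => by simp [ev, RCLike.inner_apply, mul_comm]

lemma norm_vecMulVec_star_le (v : Fin n → ℂ) :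
    ‖vecMulVec v (star v)‖ ≤ ∑ i, ‖v i‖ ^ 2 := by
  refine opNorm_le (by positivity) fun x => ?_
  rw [mulVec_vecMulVec, norm_ev_smul, norm_smul]
  have h1 : (∑ j, (star v) j * x j) = inner (𝕜 := ℂ) (ev v) (ev x) := by
    rw [← inner_ev]; rfl
  rw [h1]
  calc ‖inner (𝕜 := ℂ) (ev v) (ev x)‖ * ‖ev v‖
      ≤ (‖ev v‖ * ‖ev x‖) * ‖ev v‖ := by
        gcongr; exact norm_inner_le_norm _ _
    _ = ‖ev v‖ ^ 2 * ‖ev x‖ := by ring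
    _ = (∑ i, ‖v i‖ ^ 2) * ‖ev x‖ := by rw [norm_ev_sq]

lemma norm_ev_star (v : Fin n → ℂ) : ‖ev (star v)‖ = ‖ev v‖ := by
  have h : ‖ev (star v)‖ ^ 2 = ‖ev v‖ ^ 2 := by
    rw [norm_ev_sq, norm_ev_sq]
    exact Finset.sum_congr rfl fun i _ => by simp
  nlinarith [norm_nonneg (ev (star v)), norm_nonneg (ev v)]

lemma sum_sq_le_norm_vecMulVec (v : Fin n → ℂ) :
    (∑ i, ‖v i‖ ^ 2) ≤ ‖vecMulVec v v‖ := by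
  rcases eq_or_ne v 0 with h | h
  · simp [h]
  · have hv : ev v ≠ 0 := by
      intro hc
      apply h
      funext i
      have := congrFun (congrArg (WithLp.equiv 2 (Fin n → ℂ)) hc) i
      simpa [ev] using this
    have hvpos : 0 < ‖ev v‖ := norm_pos_iff.mpr hv
    have hmv : vecMulVec v v *ᵥ (star v) = ((∑ i, ‖v i‖ ^ 2 : ℝ) : ℂ) • v := by
      rw [mulVec_vecMulVec]
      congr 1
      push_cast
      exact Finset.sum_congr rfl fun j _ => by
        have : v j * star (v j) = ((‖v j‖ ^ 2 : ℝ) : ℂ) := by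
          rw [show star (v j) = (starRingEnd ℂ) (v j) from rfl, Complex.mul_conj']
          push_cast
          ring
        rw [Pi.star_apply, this]
        push_cast
        ring
    have key := apply_le (vecMulVec v v) (star v)
    rw [hmv, norm_ev_smul, norm_smul, norm_ev_star] at key
    have hnc : ‖((∑ i, ‖v i‖ ^ 2 : ℝ) : ℂ)‖ = ∑ i, ‖v i‖ ^ 2 := by
      rw [Complex.norm_real, Real.norm_of_nonneg (by positivity)]
    rw [hnc] at key
    exact le_of_mul_le_mul_right key hvpos


lemma norm_one_le : ‖(1 : Matrix (Fin n) (Fin n) ℂ)‖ ≤ 1 := by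
  rw [Matrix.cstar_norm_def, _root_.map_one]
  exact ContinuousLinearMap.norm_id_le

lemma prod_bound (K : Matrix (Fin n) (Fin n) ℂ) (α : Fin n → ℂ) (hK : Kᵀ * K = 1)
    (hK' : K * Kᵀ = 1) {t c₀ : ℝ} (ht : ‖Kᵀ * Matrix.diagonal α * K‖ ≤ t)
    (hα : ∀ k, ‖α k‖ ≤ c₀) (h0 : 0 ≤ t) (hc : 0 ≤ c₀) (s : Finset (Fin n)) :
    ‖Kᵀ * Matrix.diagonal (fun i => ∏ j ∈ s, (α i - α j)) * K‖ ≤ (t + c₀) ^ s.card := by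
  induction s using Finset.induction with
  | empty =>
    simp only [Finset.prod_empty, Finset.card_empty, pow_zero]
    have : Matrix.diagonal (fun _ : Fin n => (1 : ℂ)) = 1 := Matrix.diagonal_one
    rw [this, Matrix.mul_one, hK]
    exact norm_one_le
  | @insert a s ha ih =>
    have hconj : ∀ A B : Matrix (Fin n) (Fin n) ℂ,
        (Kᵀ * A * K) * (Kᵀ * B * K) = Kᵀ * (A * B) * K := by
      intro A B
      calc (Kᵀ * A * K) * (Kᵀ * B * K) = Kᵀ * A * (K * Kᵀ) * B * K := by noncomm_ring
        _ = Kᵀ * (A * B) * K := by rw [hK']; noncomm_ring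
    have hdiag : Matrix.diagonal (fun i => ∏ j ∈ insert a s, (α i - α j)) =
        Matrix.diagonal (fun i => α i - α a) *
          Matrix.diagonal (fun i => ∏ j ∈ s, (α i - α j)) := by
      rw [Matrix.diagonal_mul_diagonal]
      have : ∀ i, ∏ j ∈ insert a s, (α i - α j) = (α i - α a) * ∏ j ∈ s, (α i - α j) :=
        fun i => Finset.prod_insert ha
      simp only [this]
    have e1 : Kᵀ * Matrix.diagonal (fun i => α i - α a) * K =
        Kᵀ * Matrix.diagonal α * K - α a • 1 := by
      have hd : Matrix.diagonal (fun i => α i - α a) =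
          Matrix.diagonal α - α a • (1 : Matrix (Fin n) (Fin n) ℂ) := by
        ext i j
        by_cases h : i = j <;> simp [Matrix.diagonal_apply, Matrix.one_apply, h]
      rw [hd, Matrix.mul_sub, Matrix.sub_mul, Matrix.mul_smul, Matrix.smul_mul, Matrix.mul_one,
        hK]
    rw [hdiag, ← hconj, e1, Finset.card_insert_of_notMem ha, pow_succ']
    calc ‖(Kᵀ * Matrix.diagonal α * K - α a • 1) *
          (Kᵀ * Matrix.diagonal (fun i => ∏ j ∈ s, (α i - α j)) * K)‖
        ≤ ‖Kᵀ * Matrix.diagonal α * K - α a • 1‖ *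
            ‖Kᵀ * Matrix.diagonal (fun i => ∏ j ∈ s, (α i - α j)) * K‖ :=
          Matrix.l2_opNorm_mul _ _
      _ ≤ (t + c₀) * (t + c₀) ^ s.card := by
          gcongr
          · calc ‖Kᵀ * Matrix.diagonal α * K - α a • 1‖
                ≤ ‖Kᵀ * Matrix.diagonal α * K‖ + ‖α a • (1 : Matrix (Fin n) (Fin n) ℂ)‖ :=
                  norm_sub_le _ _
              _ ≤ t + c₀ := by
                  refine add_le_add ht ?_
                  rw [norm_smul]
                  calc ‖α a‖ * ‖(1 : Matrix (Fin n) (Fin n) ℂ)‖ ≤ ‖α a‖ * 1 := by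
                        gcongr; exact norm_one_le
                    _ = ‖α a‖ := mul_one _
                    _ ≤ c₀ := hα a

lemma decomp_S (K : Matrix (Fin n) (Fin n) ℂ) :
    K * Kᴴ = ∑ k, vecMulVec (fun i => K i k) (star (fun i => K i k)) := by
  ext i j
  simp [Matrix.mul_apply, Matrix.conjTranspose_apply, Matrix.vecMulVec_apply,
    Matrix.sum_apply]

lemma inv_S (K : Matrix (Fin n) (Fin n) ℂ) (hK : Kᵀ * K = 1) :
    (K * Kᴴ)⁻¹ = K.map (starRingEnd ℂ) * Kᵀ := by
  refine Matrix.inv_eq_right_inv ?_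
  have h1 : Kᴴ * K.map (starRingEnd ℂ) = 1 := by
    have : Kᴴ = Kᵀ.map (starRingEnd ℂ) := rfl
    rw [this, ← Matrix.map_mul, hK]
    exact Matrix.map_one _ (map_zero _) (map_one _)
  calc K * Kᴴ * (K.map (starRingEnd ℂ) * Kᵀ)
      = K * (Kᴴ * K.map (starRingEnd ℂ)) * Kᵀ := by noncomm_ring
    _ = K * Kᵀ := by rw [h1, Matrix.mul_one]
    _ = 1 := mul_eq_one_comm.mp hK

lemma decomp_Sinv (K : Matrix (Fin n) (Fin n) ℂ) :
    K.map (starRingEnd ℂ) * Kᵀ =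
      ∑ k, vecMulVec (fun i => star (K i k)) (star (fun i => star (K i k))) := by
  ext i j
  simp [Matrix.mul_apply, Matrix.vecMulVec_apply, Matrix.sum_apply, Matrix.map_apply]

lemma proj_eq (K : Matrix (Fin n) (Fin n) ℂ) (d : Fin n → ℂ) (k : Fin n)
    (hd : ∀ i, i ≠ k → d i = 0) :
    Kᵀ * Matrix.diagonal d * K = d k • vecMulVec (K k) (K k) := by
  ext i j
  rw [Matrix.mul_assoc, Matrix.mul_apply]
  have hterm : ∀ b, (Kᵀ i b) * (Matrix.diagonal d * K) b j = d b * (K b i * K b j) := by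
    intro b
    rw [Matrix.diagonal_mul]
    simp only [Matrix.transpose_apply]
    ring
  rw [Finset.sum_congr rfl fun b _ => hterm b]
  rw [Finset.sum_eq_single k (fun b _ hb => by rw [hd b hb, zero_mul]) (by simp)]
  simp only [Matrix.vecMulVec_apply, Matrix.smul_apply, smul_eq_mul]

end GramAux

lemma GramAux.l2OpNorm_eq {n : ℕ} (A : Matrix (Fin n) (Fin n) ℂ) : l2OpNorm A = ‖A‖ := rfl

/-- For every `n > 0` and positive reals `c₀, c₁` there is `B > 0` such that for any
complex orthogonal matrix `K` (`Kᵀ K = 1`) and any `α : Fin n → ℂ` with `|α k| ≤ c₀`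
and `|α i - α j| ≥ c₁` for `i ≠ j`, putting `Γ = diag α`, one has
`‖K Kᴴ‖ + ‖(K Kᴴ)⁻¹‖ ≤ B (1 + ‖Kᵀ Γ K‖)ⁿ` in the `ℓ²`-operator norm. -/

theorem exists_bound_orthogonal_gram (n : ℕ) (hn : 0 < n) (c₀ c₁ : ℝ)
    (hc₀ : 0 < c₀) (hc₁ : 0 < c₁) :
    ∃ B > (0 : ℝ), ∀ (K : Matrix (Fin n) (Fin n) ℂ) (α : Fin n → ℂ),
      Kᵀ * K = 1 → (∀ k, ‖α k‖ ≤ c₀) → (∀ i j, i ≠ j → c₁ ≤ ‖α i - α j‖) →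
      l2OpNorm (K * Kᴴ) + l2OpNorm ((K * Kᴴ)⁻¹) ≤
        B * (1 + l2OpNorm (Kᵀ * Matrix.diagonal α * K)) ^ n := by
  classical
  refine ⟨2 * n * ((1 + c₀) / c₁) ^ (n - 1), by positivity, ?_⟩
  intro K α hK hα hgap
  have hK' : K * Kᵀ = 1 := mul_eq_one_comm.mp hK
  simp only [GramAux.l2OpNorm_eq]
  set F := Kᵀ * Matrix.diagonal α * K with hF
  set t := ‖F‖ with htdef
  have ht0 : (0 : ℝ) ≤ t := norm_nonneg _
  -- bound on each row
  have hrow : ∀ k : Fin n, (∑ i, ‖K k i‖ ^ 2) ≤ (t + c₀) ^ (n - 1) / c₁ ^ (n - 1) := by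
    intro k
    set p : ℂ := ∏ j ∈ Finset.univ.erase k, (α k - α j) with hp
    have hcard : (Finset.univ.erase k).card = n - 1 := by
      rw [Finset.card_erase_of_mem (Finset.mem_univ k), Finset.card_univ, Fintype.card_fin]
    have hpnorm : c₁ ^ (n - 1) ≤ ‖p‖ := by
      rw [hp]
      calc c₁ ^ (n - 1) = ∏ _j ∈ Finset.univ.erase k, c₁ := by
            rw [Finset.prod_const, hcard]
        _ ≤ ∏ j ∈ Finset.univ.erase k, ‖α k - α j‖ := by
            refine Finset.prod_le_prod (fun _ _ => le_of_lt hc₁) ?_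
            intro j hj
            exact hgap k j (Finset.ne_of_mem_erase hj).symm
        _ = ‖∏ j ∈ Finset.univ.erase k, (α k - α j)‖ := by
            rw [norm_prod]
    have hd : ∀ i, i ≠ k → (∏ j ∈ Finset.univ.erase k, (α i - α j)) = 0 := by
      intro i hi
      exact Finset.prod_eq_zero (Finset.mem_erase.mpr ⟨hi, Finset.mem_univ i⟩) (sub_self _)
    have hGnorm : ‖Kᵀ * Matrix.diagonal (fun i => ∏ j ∈ Finset.univ.erase k, (α i - α j)) * K‖
        ≤ (t + c₀) ^ (n - 1) := by
      have := GramAux.prod_bound K α hK hK' (le_refl t) hα ht0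
        (le_of_lt hc₀) (Finset.univ.erase k)
      rwa [hcard] at this
    have hGeq : Kᵀ * Matrix.diagonal (fun i => ∏ j ∈ Finset.univ.erase k, (α i - α j)) * K =
        p • vecMulVec (K k) (K k) := by
      rw [GramAux.proj_eq K _ k hd]
    rw [hGeq, norm_smul] at hGnorm
    have hvv : (∑ i, ‖K k i‖ ^ 2) ≤ ‖vecMulVec (K k) (K k)‖ :=
      GramAux.sum_sq_le_norm_vecMulVec (K k)
    have hc₁pow : (0 : ℝ) < c₁ ^ (n - 1) := by positivity
    rw [le_div_iff₀ hc₁pow]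
    calc (∑ i, ‖K k i‖ ^ 2) * c₁ ^ (n - 1)
        ≤ ‖vecMulVec (K k) (K k)‖ * ‖p‖ := by
          refine mul_le_mul hvv hpnorm (le_of_lt hc₁pow) (norm_nonneg _)
      _ = ‖p‖ * ‖vecMulVec (K k) (K k)‖ := mul_comm _ _
      _ ≤ (t + c₀) ^ (n - 1) := hGnorm
  -- bound the Gram matrix and its inverse by the total square sum
  have h1 : ‖K * Kᴴ‖ ≤ ∑ k, ∑ i, ‖K i k‖ ^ 2 := by
    rw [GramAux.decomp_S K]
    calc ‖∑ k, vecMulVec (fun i => K i k) (star (fun i => K i k))‖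
        ≤ ∑ k, ‖vecMulVec (fun i => K i k) (star (fun i => K i k))‖ := norm_sum_le _ _
      _ ≤ ∑ k, ∑ i, ‖K i k‖ ^ 2 :=
          Finset.sum_le_sum fun k _ => GramAux.norm_vecMulVec_star_le _
  have h2 : ‖(K * Kᴴ)⁻¹‖ ≤ ∑ k, ∑ i, ‖K i k‖ ^ 2 := by
    rw [GramAux.inv_S K hK, GramAux.decomp_Sinv K]
    calc ‖∑ k, vecMulVec (fun i => star (K i k)) (star (fun i => star (K i k)))‖
        ≤ ∑ k, ‖vecMulVec (fun i => star (K i k)) (star (fun i => star (K i k)))‖ :=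
          norm_sum_le _ _
      _ ≤ ∑ k, ∑ i, ‖star (K i k)‖ ^ 2 :=
          Finset.sum_le_sum fun k _ => GramAux.norm_vecMulVec_star_le _
      _ = ∑ k, ∑ i, ‖K i k‖ ^ 2 := by simp [norm_star]
  have hcomm : (∑ k, ∑ i, ‖K i k‖ ^ 2) = ∑ k, ∑ i, ‖K k i‖ ^ 2 := Finset.sum_comm
  have htot : (∑ k, ∑ i, ‖K i k‖ ^ 2) ≤ n * ((t + c₀) ^ (n - 1) / c₁ ^ (n - 1)) := by
    rw [hcomm]
    calc (∑ k : Fin n, ∑ i, ‖K k i‖ ^ 2)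
        ≤ ∑ _k : Fin n, (t + c₀) ^ (n - 1) / c₁ ^ (n - 1) :=
          Finset.sum_le_sum fun k _ => hrow k
      _ = n * ((t + c₀) ^ (n - 1) / c₁ ^ (n - 1)) := by
          rw [Finset.sum_const, Finset.card_univ, Fintype.card_fin, nsmul_eq_mul]
  -- final arithmetic
  have hfinal : 2 * (n * ((t + c₀) ^ (n - 1) / c₁ ^ (n - 1))) ≤
      2 * n * ((1 + c₀) / c₁) ^ (n - 1) * (1 + t) ^ n := by
    have hstep1 : (t + c₀) ^ (n - 1) ≤ (1 + c₀) ^ (n - 1) * (1 + t) ^ (n - 1) := by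
      rw [← mul_pow]
      refine pow_le_pow_left₀ (by linarith) (by nlinarith) _
    have hstep2 : (1 + t) ^ (n - 1) ≤ (1 + t) ^ n :=
      pow_le_pow_right₀ (by linarith) (Nat.sub_le n 1)
    have hc₁pow : (0 : ℝ) < c₁ ^ (n - 1) := by positivity
    calc 2 * (n * ((t + c₀) ^ (n - 1) / c₁ ^ (n - 1)))
        = 2 * n * ((t + c₀) ^ (n - 1) / c₁ ^ (n - 1)) := by ring
      _ ≤ 2 * n * ((1 + c₀) ^ (n - 1) * (1 + t) ^ n / c₁ ^ (n - 1)) := by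
          gcongr
          calc (t + c₀) ^ (n - 1) ≤ (1 + c₀) ^ (n - 1) * (1 + t) ^ (n - 1) := hstep1
            _ ≤ (1 + c₀) ^ (n - 1) * (1 + t) ^ n :=
                mul_le_mul_of_nonneg_left hstep2 (by positivity)
      _ = 2 * n * ((1 + c₀) ^ (n - 1) / c₁ ^ (n - 1)) * (1 + t) ^ n := by ring
      _ = 2 * n * ((1 + c₀) / c₁) ^ (n - 1) * (1 + t) ^ n := by rw [div_pow]
  calc ‖K * Kᴴ‖ + ‖(K * Kᴴ)⁻¹‖
      ≤ (∑ k, ∑ i, ‖K i k‖ ^ 2) + (∑ k, ∑ i, ‖K i k‖ ^ 2) := add_le_add h1 h2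
    _ = 2 * (∑ k, ∑ i, ‖K i k‖ ^ 2) := by ring
    _ ≤ 2 * (n * ((t + c₀) ^ (n - 1) / c₁ ^ (n - 1))) := by linarith
    _ ≤ 2 * n * ((1 + c₀) / c₁) ^ (n - 1) * (1 + t) ^ n := hfinal
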